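/- Every nonzero polynomial P over ℂ of degree p ≥ 1 can be written as P(z) = A · ∏_{j=1}^{N} [z - z_j]_q^{n_j}, where A ∈ ℂ is a nonzero constant, z_j ∈ ℂ, n_j ∈ ℕ with n_j ≥ 1, n_1 + ⋯ + n_N = p, each [z - z_j]_q^{n_j} = (z - z_j)(z - q z_j)⋯(z - q^{n_j - 1} z_j), and for each j, z_j is a zero of ∏_{k=j}^{N}[z - z_k]_q^{n_k} with q-weight n_j satisfying the non-extendability condition that q^{-1}z_j is not a zero of ∏_{k=j}^{N}[z - z_k]_q^{n_k} (here q ∈ ℂ, 0 < |q|, |q| ≠ 1). -/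

import Mathlib

open Polynomial

noncomputable section

/-- q-number [n]_q = 1 + q + ... + q^{n-1}. -/
def qNum (q : ℂ) (n : ℕ) : ℂ := ∑ i ∈ Finset.range n, q ^ i

/-- q-factorial. -/
def qFact (q : ℂ) (n : ℕ) : ℂ := ∏ i ∈ Finset.range n, qNum q (i + 1)

/-- q-binomial coefficient. -/
def qBinom (q : ℂ) (k j : ℕ) : ℂ := qFact q k / (qFact q j * qFact q (k - j))

/-- q-derivative of a function. -/
def Dqf (q : ℂ) (f : ℂ → ℂ) : ℂ → ℂ := fun z => (f (q * z) - f z) / (q * z - z)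

/-- q-analogue of the power (z-w)^n : [z-w]_q^n = (z-w)(z-qw)...(z-q^{n-1}w). -/
def qPow (q w : ℂ) (n : ℕ) : Polynomial ℂ := ∏ i ∈ Finset.range n, (X - C (q ^ i * w))

/-- q-derivative as a polynomial operation. -/
def qDeriv (q : ℂ) (f : Polynomial ℂ) : Polynomial ℂ :=
  C (q - 1)⁻¹ * ((f.comp (C q * X) - f) /ₘ X)

/-- `w` is a zero of `f` with q-weight `n`. -/
def IsZeroQWeight (q : ℂ) (f : Polynomial ℂ) (w : ℂ) (n : ℕ) : Prop :=
  (w = 0 ∧ f ≠ 0 ∧ Polynomial.rootMultiplicity 0 f = n) ∨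
  (w ≠ 0 ∧ (∀ k < n, f.eval (q ^ k * w) = 0) ∧ f.eval (q ^ n * w) ≠ 0)

/-- Canonical q-chain factorization of a polynomial. -/
structure QFactorization (q : ℂ) (P : Polynomial ℂ) where
  N : ℕ
  z : Fin N → ℂ
  n : Fin N → ℕ
  A : ℂ
  A_ne : A ≠ 0
  n_pos : ∀ j, 1 ≤ n j
  eq : P = Polynomial.C A * ∏ j, qPow q (z j) (n j)
  deg_sum : ∑ j, n j = P.natDegree
  chain : ∀ j : Fin N,
    IsZeroQWeight q (∏ k ∈ Finset.univ.filter (fun k => j ≤ k), qPow q (z k) (n k)) (z j) (n j)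
  maximal : ∀ j : Fin N, z j ≠ 0 →
    (∏ k ∈ Finset.univ.filter (fun k => j ≤ k), qPow q (z k) (n k)).eval (q⁻¹ * z j) ≠ 0

/-- q-difference radical associated to a canonical factorization. -/
def radQ {q : ℂ} {P : Polynomial ℂ} (F : QFactorization q P) : Polynomial ℂ :=
  ∏ j, (X - C (F.z j))

local instance : DecidableEq (Polynomial ℂ) := Classical.decEq _

/-- Truncated q-radical of level μ. -/
def radTruncQ {q : ℂ} {P : Polynomial ℂ} (F : QFactorization q P) (μ : ℕ) : Polynomial ℂ :=
  EuclideanDomain.gcd (∏ j, qPow q (F.z j) (F.n j)) (∏ j, qPow q (F.z j) μ)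

/-- f and g have a nonconstant common q-divisor. -/
def HasCommonQDivisor (q : ℂ) (f g : Polynomial ℂ) : Prop :=
  ∃ (z₀ z₁ z₂ : ℂ) (m n : ℕ) (F G : Polynomial ℂ), 1 ≤ m ∧ 1 ≤ n ∧
    f = qPow q z₁ m * F ∧ g = qPow q z₂ n * G ∧ (z₀ = z₁ ∨ z₀ = z₂) ∧
    f * g = qPow q z₀ (m + n) * (F * G)

/-- q-shifted power [P]_q^n(z) = P(z)P(qz)...(P(q^{n-1}z)). -/
def qShiftPow (q : ℂ) (P : Polynomial ℂ) (n : ℕ) : Polynomial ℂ :=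
  ∏ i ∈ Finset.range n, P.comp (C (q ^ i) * X)

/-- gcd of a list of polynomials. -/
def gcdList (l : List (Polynomial ℂ)) : Polynomial ℂ := l.foldr EuclideanDomain.gcd 0

/-- Auxiliary lemmas for the existence proof. -/
lemma qPow_monic (q w : ℂ) (n : ℕ) : (qPow q w n).Monic :=
  monic_prod_of_monic _ _ fun _ _ => monic_X_sub_C _

lemma qPow_ne_zero' (q w : ℂ) (n : ℕ) : qPow q w n ≠ 0 := (qPow_monic q w n).ne_zero

lemma qPow_natDegree (q w : ℂ) (n : ℕ) : (qPow q w n).natDegree = n := by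
  rw [qPow, natDegree_prod_of_monic _ _ fun _ _ => monic_X_sub_C _]
  simp only [natDegree_X_sub_C, Finset.sum_const, Finset.card_range, smul_eq_mul, mul_one]

lemma qPow_zero_left (q : ℂ) (n : ℕ) : qPow q 0 n = X ^ n := by
  simp [qPow]

lemma qpow_inj (q : ℂ) (hq0 : q ≠ 0) (habs : ‖q‖ ≠ 1) :
    Function.Injective fun i : ℕ => q ^ i := by
  have key : ∀ i j : ℕ, i < j → q ^ i ≠ q ^ j := by
    intro i j hij h
    have h1 : q ^ i * q ^ (j - i) = q ^ i * 1 := by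
      rw [mul_one, ← pow_add]; rw [h]; congr 1; omega
    have h2 : q ^ (j - i) = 1 := mul_left_cancel₀ (pow_ne_zero i hq0) h1
    have h3 : ‖q‖ ^ (j - i) = 1 := by
      rw [← norm_pow, h2, norm_one]
    rcases lt_trichotomy ‖q‖ 1 with hl | he | hg
    · have := pow_lt_one₀ (norm_nonneg q) hl (by omega : j - i ≠ 0)
      linarith
    · exact habs he
    · have := one_lt_pow₀ hg (by omega : j - i ≠ 0)
      linarith
  intro i j h
  by_contra hne
  rcases lt_or_gt_of_ne hne with h1 | h1
  · exact key i j h1 h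
  · exact key j i h1 h.symm

lemma qPow_as_multiset (q w : ℂ) (n : ℕ) :
    qPow q w n = (((Multiset.range n).map fun i => q ^ i * w).map fun a => X - C a).prod := by
  rw [qPow, Finset.prod_eq_multiset_prod, Multiset.map_map]
  rfl

lemma qchain_nodup (q w : ℂ) (hq0 : q ≠ 0) (habs : ‖q‖ ≠ 1) (hw : w ≠ 0) (n : ℕ) :
    ((Multiset.range n).map fun i => q ^ i * w).Nodup := by
  refine (Multiset.nodup_range n).map ?_
  intro i j h
  exact qpow_inj q hq0 habs (mul_right_cancel₀ hw h)

lemma qPow_dvd (q w : ℂ) (hq0 : q ≠ 0) (habs : ‖q‖ ≠ 1) (hw : w ≠ 0)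
    (P : Polynomial ℂ) (hP : P ≠ 0) (n : ℕ) (hroot : ∀ k < n, P.IsRoot (q ^ k * w)) :
    qPow q w n ∣ P := by
  rw [qPow_as_multiset]
  refine dvd_trans (Multiset.prod_dvd_prod_of_le (Multiset.map_le_map ?_))
    (prod_multiset_X_sub_C_dvd P)
  refine (Multiset.le_iff_subset (qchain_nodup q w hq0 habs hw n)).2 ?_
  intro a ha
  rw [Multiset.mem_map] at ha
  obtain ⟨i, hi, rfl⟩ := ha
  rw [Multiset.mem_range] at hi
  rw [mem_roots hP]
  exact hroot i hi

lemma exists_not_root (q w : ℂ) (hq0 : q ≠ 0) (habs : ‖q‖ ≠ 1) (hw : w ≠ 0)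
    (P : Polynomial ℂ) (hP : P ≠ 0) : ∃ n, ¬ P.IsRoot (q ^ n * w) := by
  by_contra h
  push_neg at h
  have hle : ((Multiset.range (P.natDegree + 1)).map fun i => q ^ i * w) ≤ P.roots := by
    refine (Multiset.le_iff_subset (qchain_nodup q w hq0 habs hw _)).2 ?_
    intro a ha
    rw [Multiset.mem_map] at ha
    obtain ⟨i, _, rfl⟩ := ha
    rw [mem_roots hP]
    exact h i
  have h1 : ((Multiset.range (P.natDegree + 1)).map fun i => q ^ i * w).card
      = P.natDegree + 1 := by simp
  have h2 := Multiset.card_le_card hle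
  have h3 := P.card_roots'
  omega

lemma suffix_succ {M : Type*} [CommMonoid M] {N : ℕ} (f : Fin (N+1) → M) (j : Fin N) :
    ∏ k ∈ Finset.univ.filter (fun k => j.succ ≤ k), f k
      = ∏ k ∈ Finset.univ.filter (fun k => j ≤ k), f k.succ := by
  rw [Finset.prod_filter, Finset.prod_filter, Fin.prod_univ_succ]
  have h0 : ¬ (j.succ ≤ (0 : Fin (N+1))) := by simp [Fin.le_def]
  rw [if_neg h0, one_mul]
  refine Finset.prod_congr rfl fun k _ => ?_
  simp [Fin.succ_le_succ_iff]

lemma suffix_zero {M : Type*} [CommMonoid M] {N : ℕ} (f : Fin (N+1) → M) :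
    ∏ k ∈ Finset.univ.filter (fun k => (0 : Fin (N+1)) ≤ k), f k = ∏ k, f k := by
  rw [Finset.filter_true_of_mem fun k _ => Fin.zero_le k]

lemma eq_C_mul_X_pow_of_roots_zero (P : ℂ[X]) (hall : ∀ a ∈ P.roots, a = 0) :
    P = C P.leadingCoeff * X ^ P.natDegree := by
  have hs := IsAlgClosed.splits P
  have heq := hs.eq_prod_roots
  have hcard : P.roots.card = P.natDegree := splits_iff_card_roots.1 hs
  have hrep : P.roots = Multiset.replicate P.natDegree 0 :=
    Multiset.eq_replicate.2 ⟨hcard, hall⟩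
  have hprod : (Multiset.map (fun a => X - C a)
      (Multiset.replicate P.natDegree (0:ℂ))).prod = X ^ P.natDegree := by
    simp [Multiset.map_replicate, Multiset.prod_replicate]
  conv_lhs => rw [heq, hrep, hprod]

lemma exists_qFact_aux (q : ℂ) (hq0 : q ≠ 0) (habs : ‖q‖ ≠ 1) :
    ∀ p : ℕ, ∀ P : Polynomial ℂ, P ≠ 0 → P.natDegree = p →
      Nonempty (QFactorization q P) := by
  intro p
  induction p using Nat.strong_induction_on with
  | _ p ih =>
  intro P hP hdeg
  classical
  by_cases hS : (P.roots.toFinset.filter (fun x => x ≠ 0)).Nonempty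
  · -- there is a nonzero root; pick one of extremal modulus
    have hchoice : ∃ w, w ≠ 0 ∧ P.IsRoot w ∧ ¬ P.IsRoot (q⁻¹ * w) := by
      have hmem : ∀ x ∈ P.roots.toFinset.filter (fun x => x ≠ 0),
          x ≠ 0 ∧ P.IsRoot x := by
        intro x hx
        rw [Finset.mem_filter, Multiset.mem_toFinset, mem_roots hP] at hx
        exact ⟨hx.2, hx.1⟩
      have hqpos : 0 < ‖q‖ := by
        simpa [norm_pos_iff] using hq0
      have hqq : ‖q‖ * ‖q‖⁻¹ = 1 := mul_inv_cancel₀ (ne_of_gt hqpos)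
      rcases lt_or_gt_of_ne habs with hlt | hgt
      · obtain ⟨w, hwS, hext⟩ := Finset.exists_max_image _ (fun x : ℂ => ‖x‖) hS
        obtain ⟨hw0, hwroot⟩ := hmem w hwS
        refine ⟨w, hw0, hwroot, ?_⟩
        intro hroot
        have hwI : q⁻¹ * w ∈ P.roots.toFinset.filter (fun x => x ≠ 0) := by
          rw [Finset.mem_filter, Multiset.mem_toFinset, mem_roots hP]
          exact ⟨hroot, mul_ne_zero (inv_ne_zero hq0) hw0⟩
        have h1 := hext _ hwI
        rw [norm_mul, norm_inv] at h1
        have hwpos : 0 < ‖w‖ := by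
          simpa [norm_pos_iff] using hw0
        nlinarith
      · obtain ⟨w, hwS, hext⟩ := Finset.exists_min_image _ (fun x : ℂ => ‖x‖) hS
        obtain ⟨hw0, hwroot⟩ := hmem w hwS
        refine ⟨w, hw0, hwroot, ?_⟩
        intro hroot
        have hwI : q⁻¹ * w ∈ P.roots.toFinset.filter (fun x => x ≠ 0) := by
          rw [Finset.mem_filter, Multiset.mem_toFinset, mem_roots hP]
          exact ⟨hroot, mul_ne_zero (inv_ne_zero hq0) hw0⟩
        have h1 := hext _ hwI
        rw [norm_mul, norm_inv] at h1
        have hwpos : 0 < ‖w‖ := by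
          simpa [norm_pos_iff] using hw0
        nlinarith
    obtain ⟨w, hw, hwroot, hqinv⟩ := hchoice
    have hex := exists_not_root q w hq0 habs hw P hP
    set n := Nat.find hex with hn
    have hnot : ¬ P.IsRoot (q ^ n * w) := Nat.find_spec hex
    have hroots : ∀ k < n, P.IsRoot (q ^ k * w) := fun k hk =>
      not_not.1 (Nat.find_min hex hk)
    have hn1 : 1 ≤ n := by
      rcases Nat.eq_zero_or_pos n with h0 | h1
      · exfalso; apply hnot; rw [h0]; simpa using hwroot
      · exact h1
    obtain ⟨P', hP'⟩ := qPow_dvd q w hq0 habs hw P hP n hroots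
    have hP'0 : P' ≠ 0 := by
      rintro rfl
      rw [mul_zero] at hP'
      exact hP hP'
    have hdegP : P.natDegree = n + P'.natDegree := by
      rw [hP', natDegree_mul (qPow_ne_zero' q w n) hP'0, qPow_natDegree]
    obtain ⟨F⟩ := ih P'.natDegree (by omega) P' hP'0 rfl
    have hfull : (∏ j : Fin (F.N + 1), qPow q ((Fin.cons w F.z : Fin (F.N+1) → ℂ) j) ((Fin.cons n F.n : Fin (F.N+1) → ℕ) j))
        = qPow q w n * ∏ j, qPow q (F.z j) (F.n j) := by
      rw [Fin.prod_univ_succ]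
      simp [Fin.cons_zero, Fin.cons_succ]
    have heqP : P = C F.A *
        ∏ j : Fin (F.N + 1), qPow q ((Fin.cons w F.z : Fin (F.N+1) → ℂ) j) ((Fin.cons n F.n : Fin (F.N+1) → ℕ) j) := by
      rw [hfull, hP']
      conv_lhs => rw [F.eq]
      ring
    have hev : ∀ x, P.eval x = F.A *
        (∏ j : Fin (F.N + 1), qPow q ((Fin.cons w F.z : Fin (F.N+1) → ℂ) j) ((Fin.cons n F.n : Fin (F.N+1) → ℕ) j)).eval x := by
      intro x
      conv_lhs => rw [heqP]
      simp
    refine ⟨⟨F.N + 1, (Fin.cons w F.z : Fin (F.N+1) → ℂ), (Fin.cons n F.n : Fin (F.N+1) → ℕ), F.A, F.A_ne, ?_, heqP, ?_, ?_, ?_⟩⟩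
    · -- n_pos
      intro j
      refine Fin.cases ?_ ?_ j
      · simpa using hn1
      · intro i; simpa using F.n_pos i
    · -- deg_sum
      rw [Fin.sum_univ_succ]
      simp only [Fin.cons_zero, Fin.cons_succ]
      rw [F.deg_sum]
      omega
    · -- chain
      intro j
      refine Fin.cases ?_ ?_ j
      · simp only [Fin.cons_zero]
        rw [suffix_zero]
        refine Or.inr ⟨hw, ?_, ?_⟩
        · intro k hk
          have h0 := hroots k hk
          rw [IsRoot, hev] at h0
          exact (mul_eq_zero.1 h0).resolve_left F.A_ne
        · intro h0
          apply hnot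
          rw [IsRoot, hev, h0, mul_zero]
      · intro i
        rw [suffix_succ]
        simpa only [Fin.cons_succ] using F.chain i
    · -- maximal
      intro j
      refine Fin.cases ?_ ?_ j
      · intro _
        simp only [Fin.cons_zero]
        rw [suffix_zero]
        intro h0
        apply hqinv
        rw [IsRoot, hev, h0, mul_zero]
      · intro i hi
        rw [suffix_succ]
        have := F.maximal i (by simpa using hi)
        simpa only [Fin.cons_succ] using this
  · -- all roots are zero
    have hall : ∀ a ∈ P.roots, a = 0 := by
      intro a ha
      by_contra h
      exact hS ⟨a, Finset.mem_filter.2 ⟨Multiset.mem_toFinset.2 ha, h⟩⟩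
    by_cases hp : p = 0
    · -- constant polynomial
      have hdeg0 : P.natDegree = 0 := by omega
      have hPC : P = C (P.coeff 0) := eq_C_of_natDegree_eq_zero hdeg0
      refine ⟨⟨0, Fin.elim0, Fin.elim0, P.coeff 0, ?_, fun j => j.elim0, ?_, ?_,
        fun j => j.elim0, fun j => j.elim0⟩⟩
      · intro h
        apply hP
        rw [hPC, h, map_zero]
      · simpa using hPC
      · simp [hdeg0]
    · -- P = C lc * X^p
      have hPX := eq_C_mul_X_pow_of_roots_zero P hall
      refine ⟨⟨1, fun _ => 0, fun _ => P.natDegree, P.leadingCoeff,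
        leadingCoeff_ne_zero.2 hP, ?_, ?_, ?_, ?_, ?_⟩⟩
      · intro _
        show 1 ≤ P.natDegree
        omega
      · rw [Fin.prod_univ_one, qPow_zero_left]; exact hPX
      · simp
      · intro j
        have hfilter : Finset.univ.filter (fun k : Fin 1 => j ≤ k) = Finset.univ :=
          Finset.filter_true_of_mem fun k _ => le_of_eq (Subsingleton.elim j k)
        rw [hfilter]
        refine Or.inl ⟨rfl, ?_, ?_⟩
        · rw [Fin.prod_univ_one, qPow_zero_left]
          exact pow_ne_zero _ X_ne_zero
        · rw [Fin.prod_univ_one, qPow_zero_left]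
          simpa using Polynomial.rootMultiplicity_X_sub_C_pow (R := ℂ) 0 P.natDegree
      · intro j hj
        exact absurd rfl hj

/-- Existence of the canonical q-chain factorization. -/
theorem exists_qFactorization (q : ℂ) (hq0 : q ≠ 0) (habs : ‖q‖ ≠ 1)
    (P : Polynomial ℂ) (hP : P ≠ 0) (hdeg : 1 ≤ P.natDegree) :
    Nonempty (QFactorization q P) :=
  exists_qFact_aux q hq0 habs P.natDegree P hP rfl
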